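/- Fix an integer k ≥ 0. Then as m → ∞, G(m − k, m) is asymptotically equivalent to (m^k / (2^k k!)) · m!, i.e. the ratio G(m − k, m) / (m^k m! / (2^k k!)) converges to 1 as m → ∞. -/

import Mathlib

open Finset Filter Nat


/-- `G r m = ∑_{k₁+⋯+k_r = m, kᵢ ≥ 1} m!/(k₁!⋯k_r!)`, the sum of multinomial
coefficients over all `r`-tuples of positive integers summing to `m`. -/
def G (r m : ℕ) : ℕ :=
  ∑ k ∈ (Finset.Nat.antidiagonalTuple r m).filter (fun k => ∀ i, 0 < k i),
    Nat.multinomial Finset.univ k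

private def psi (k r : ℕ) (hr : 0 < r) (t : Fin r → ℕ) (j : Fin (k - 1)) :
    Fin r × Fin (k + 1) :=
  let x := ((Finset.univ.filter fun i => 2 ≤ t i).sort (· ≤ ·)).getD (j : ℕ) ⟨0, hr⟩
  (x, ⟨min (t x - 1) k, Nat.lt_succ_of_le (min_le_right _ _)⟩)

private lemma psi_fst (k r : ℕ) (hr : 0 < r) (t : Fin r → ℕ) (j : Fin (k - 1)) :
    (psi k r hr t j).1
      = ((Finset.univ.filter fun i => 2 ≤ t i).sort (· ≤ ·)).getD (j : ℕ) ⟨0, hr⟩ := rfl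

private lemma psi_snd (k r : ℕ) (hr : 0 < r) (t : Fin r → ℕ) (j : Fin (k - 1)) :
    ((psi k r hr t j).2 : ℕ) = min (t (psi k r hr t j).1 - 1) k := rfl

private lemma core (k r : ℕ) (hr : 0 < r) (F : Finset (Fin r → ℕ))
    (hFiff : ∀ t, t ∈ F ↔ ((∑ i, t i = r + k) ∧ ∀ i, 0 < t i)) :
    r.choose k * (r + k)! ≤ 2 ^ k * ∑ t ∈ F, Nat.multinomial Finset.univ t ∧
    2 ^ k * ∑ t ∈ F, Nat.multinomial Finset.univ t ≤
      r.choose k * (r + k)! + 2 ^ k * (k * ((k + 1) * r) ^ (k - 1)) * (r + k)! := by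
  set M := F.filter (fun t => ∀ i, t i ≤ 2) with hM
  set B := F.filter (fun t => ¬ ∀ i, t i ≤ 2) with hB
  -- the number of 2's in an element of M is k
  have hcardS : ∀ t ∈ M, (univ.filter fun i => t i = 2).card = k := by
    intro t ht
    obtain ⟨htF, ht2⟩ := Finset.mem_filter.mp ht
    obtain ⟨hsum, hpos⟩ := (hFiff t).mp htF
    have h : ∑ i, t i = (univ.filter fun i => t i = 2).card + r := by
      calc ∑ i, t i = ∑ i, ((if t i = 2 then 1 else 0) + 1) :=
            Finset.sum_congr rfl fun i _ => by
              have := hpos i; have := ht2 i; split <;> omega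
        _ = (∑ i : Fin r, if t i = 2 then 1 else 0) + r := by
            rw [Finset.sum_add_distrib, Finset.sum_const, Finset.card_univ, Fintype.card_fin,
              smul_eq_mul, mul_one]
        _ = _ := by rw [← Finset.card_filter]
    omega
  have claim1 : ∀ t ∈ M, 2 ^ k * Nat.multinomial Finset.univ t = (r + k)! := by
    intro t ht
    obtain ⟨htF, ht2⟩ := Finset.mem_filter.mp ht
    obtain ⟨hsum, hpos⟩ := (hFiff t).mp htF
    have hprod : ∏ i, (t i)! = 2 ^ k := by
      rw [← Finset.prod_filter_mul_prod_filter_not univ (fun i => t i = 2)]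
      have h1 : ∏ i ∈ univ.filter (fun i => t i = 2), (t i)! = 2 ^ k := by
        calc ∏ i ∈ univ.filter (fun i => t i = 2), (t i)!
            = ∏ _i ∈ univ.filter (fun i => t i = 2), 2 :=
              Finset.prod_congr rfl fun i hi => by
                have h2 : t i = 2 := (Finset.mem_filter.mp hi).2
                rw [h2]; rfl
          _ = 2 ^ k := by rw [Finset.prod_const, hcardS t ht]
      have h2 : ∏ i ∈ univ.filter (fun i => ¬ t i = 2), (t i)! = 1 := by
        apply Finset.prod_eq_one
        intro i hi
        have h3 : ¬ t i = 2 := (Finset.mem_filter.mp hi).2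
        have h4 := hpos i; have h5 := ht2 i
        have h6 : t i = 1 := by omega
        rw [h6]; rfl
      rw [h1, h2, mul_one]
    have hspec := Nat.multinomial_spec univ t
    rw [hprod, hsum] at hspec
    exact hspec
  have hMcard : M.card = r.choose k := by
    have hpc : ((univ : Finset (Fin r)).powersetCard k).card = r.choose k := by
      rw [Finset.card_powersetCard, Finset.card_univ, Fintype.card_fin]
    rw [← hpc]
    apply Finset.card_nbij' (i := fun t => univ.filter fun i => t i = 2)
      (j := fun S i => if i ∈ S then 2 else 1)
    · intro t ht
      rw [Finset.mem_coe, Finset.mem_powersetCard]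
      exact ⟨Finset.subset_univ _, hcardS t ht⟩
    · intro S hS
      have hcard : S.card = k := (Finset.mem_powersetCard.mp hS).2
      have hsum : ∑ i : Fin r, (if i ∈ S then 2 else 1) = r + k := by
        calc ∑ i : Fin r, (if i ∈ S then 2 else 1)
            = ∑ i : Fin r, ((if i ∈ S then 1 else 0) + 1) :=
              Finset.sum_congr rfl fun i _ => by split <;> rfl
          _ = (∑ i : Fin r, if i ∈ S then 1 else 0) + r := by
              rw [Finset.sum_add_distrib, Finset.sum_const, Finset.card_univ, Fintype.card_fin,
                smul_eq_mul, mul_one]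
          _ = S.card + r := by
              rw [Finset.sum_ite_mem, Finset.univ_inter, Finset.sum_const, smul_eq_mul, mul_one]
          _ = r + k := by omega
      rw [hM, Finset.mem_coe, Finset.mem_filter]
      refine ⟨(hFiff _).mpr ⟨hsum, fun i => by by_cases h : i ∈ S <;> simp [h]⟩,
        fun i => by by_cases h : i ∈ S <;> simp [h]⟩
    · intro t ht
      obtain ⟨htF, ht2⟩ := Finset.mem_filter.mp ht
      obtain ⟨hsum, hpos⟩ := (hFiff t).mp htF
      funext i
      by_cases h : t i = 2
      · simp [h]
      · have := hpos i; have := ht2 i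
        simp only [Finset.mem_filter, Finset.mem_univ, true_and, h, if_false]
        omega
    · intro S hS
      ext i
      simp only [Finset.mem_filter, Finset.mem_univ, true_and]
      by_cases h : i ∈ S <;> simp [h]
  -- splitting the sum
  have hsplit : ∑ t ∈ F, Nat.multinomial Finset.univ t
      = (∑ t ∈ M, Nat.multinomial Finset.univ t) + ∑ t ∈ B, Nat.multinomial Finset.univ t := by
    rw [hM, hB, Finset.sum_filter_add_sum_filter_not]
  have hMsum : 2 ^ k * ∑ t ∈ M, Nat.multinomial Finset.univ t = r.choose k * (r + k)! := by
    rw [Finset.mul_sum, Finset.sum_congr rfl claim1, Finset.sum_const, smul_eq_mul, hMcard]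
  -- bounds for B
  have hBfacts : ∀ t ∈ B, (∀ i, 0 < t i) ∧ (∑ i, (t i - 1) = k) ∧ (∃ i, 3 ≤ t i) := by
    intro t ht
    obtain ⟨htF, hnot⟩ := Finset.mem_filter.mp ht
    obtain ⟨hsum, hpos⟩ := (hFiff t).mp htF
    push_neg at hnot
    obtain ⟨i₀, hi₀⟩ := hnot
    refine ⟨hpos, ?_, ⟨i₀, by omega⟩⟩
    have h : ∑ i, t i = (∑ i, (t i - 1)) + r := by
      calc ∑ i, t i = ∑ i, ((t i - 1) + 1) :=
            Finset.sum_congr rfl fun i _ => by have := hpos i; omega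
        _ = _ := by
            rw [Finset.sum_add_distrib, Finset.sum_const, Finset.card_univ, Fintype.card_fin,
              smul_eq_mul, mul_one]
    omega
  have hBk : ∀ t ∈ B, 2 ≤ k := by
    intro t ht
    obtain ⟨hpos, hesum, i₀, hi₀⟩ := hBfacts t ht
    have h1 : t i₀ - 1 ≤ ∑ i, (t i - 1) :=
      Finset.single_le_sum (f := fun i => t i - 1) (fun i _ => Nat.zero_le _) (Finset.mem_univ i₀)
    omega
  have hBterm : ∀ t ∈ B, Nat.multinomial Finset.univ t ≤ (r + k)! := by
    intro t ht
    obtain ⟨htF, _⟩ := Finset.mem_filter.mp ht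
    obtain ⟨hsum, hpos⟩ := (hFiff t).mp htF
    have hd : Nat.multinomial Finset.univ t ∣ (r + k)! :=
      ⟨∏ i, (t i)!, by rw [← hsum, ← Nat.multinomial_spec]; ring⟩
    exact Nat.le_of_dvd (Nat.factorial_pos _) hd
  have hBsum : ∑ t ∈ B, Nat.multinomial Finset.univ t ≤ B.card * (r + k)! := by
    calc ∑ t ∈ B, Nat.multinomial Finset.univ t ≤ ∑ _t ∈ B, (r + k)! :=
          Finset.sum_le_sum hBterm
      _ = B.card * (r + k)! := by rw [Finset.sum_const, smul_eq_mul]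
  have hBcard : B.card ≤ k * ((k + 1) * r) ^ (k - 1) := by
    rcases Nat.lt_or_ge k 2 with hk | hk
    · have hBe : B = ∅ :=
        Finset.eq_empty_of_forall_notMem fun t ht => absurd (hBk t ht) (by omega)
      simp [hBe]
    · have hle1 : ∀ t ∈ B, ∀ x : Fin r, t x - 1 ≤ k := by
        intro t ht x
        obtain ⟨hpos, hesum, _⟩ := hBfacts t ht
        have h1 : t x - 1 ≤ ∑ i, (t i - 1) :=
          Finset.single_le_sum (f := fun i => t i - 1) (fun i _ => Nat.zero_le _)
            (Finset.mem_univ x)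
        omega
      have hval : ∀ t ∈ B, ∀ j, ((psi k r hr t j).2 : ℕ) = t (psi k r hr t j).1 - 1 := by
        intro t ht j
        rw [psi_snd]
        exact min_eq_left (hle1 t ht _)
      have hsuppcard : ∀ t ∈ B, (univ.filter fun i => 2 ≤ t i).card ≤ k - 1 := by
        intro t ht
        obtain ⟨hpos, hesum, i₀, hi₀⟩ := hBfacts t ht
        have hi₀S : i₀ ∈ univ.filter fun i => 2 ≤ t i :=
          Finset.mem_filter.mpr ⟨Finset.mem_univ _, by omega⟩
        have h1 : ∑ _i ∈ (univ.filter fun i => 2 ≤ t i), 1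
            < ∑ i ∈ (univ.filter fun i => 2 ≤ t i), (t i - 1) := by
          apply Finset.sum_lt_sum
          · intro i hi; have := (Finset.mem_filter.mp hi).2; omega
          · exact ⟨i₀, hi₀S, by omega⟩
        have h2 : ∑ i ∈ (univ.filter fun i => 2 ≤ t i), (t i - 1) ≤ ∑ i, (t i - 1) :=
          Finset.sum_le_sum_of_subset (Finset.subset_univ _)
        rw [Finset.sum_const, smul_eq_mul, mul_one] at h1
        omega
      have hkey : ∀ t ∈ B, ∀ i : Fin r, 2 ≤ t i → ∃ j : Fin (k - 1), (psi k r hr t j).1 = i := by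
        intro t ht i hi
        have hmemL : i ∈ ((univ.filter fun i => 2 ≤ t i).sort (· ≤ ·)) :=
          (Finset.mem_sort _).mpr (Finset.mem_filter.mpr ⟨Finset.mem_univ _, hi⟩)
        obtain ⟨n, hn, hval'⟩ := List.mem_iff_getElem.mp hmemL
        have hlen : ((univ.filter fun i => 2 ≤ t i).sort (· ≤ ·)).length ≤ k - 1 := by
          rw [Finset.length_sort]; exact hsuppcard t ht
        refine ⟨⟨n, by omega⟩, ?_⟩
        rw [psi_fst, List.getD_eq_getElem _ _ (by simpa using hn)]
        exact hval'
      calc B.card ≤ (univ : Finset (Fin (k - 1) → Fin r × Fin (k + 1))).card := by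
            apply Finset.card_le_card_of_injOn (psi k r hr) (fun _ _ => Finset.mem_univ _)
            intro t₁ ht₁' t₂ ht₂' heq
            have ht₁ : t₁ ∈ B := ht₁'
            have ht₂ : t₂ ∈ B := ht₂'
            obtain ⟨hpos₁, -, -⟩ := hBfacts t₁ ht₁
            obtain ⟨hpos₂, -, -⟩ := hBfacts t₂ ht₂
            funext i
            by_cases h₁ : 2 ≤ t₁ i
            · obtain ⟨j, hj⟩ := hkey t₁ ht₁ i h₁
              have e₁ : ((psi k r hr t₁ j).2 : ℕ) = t₁ i - 1 := by rw [hval t₁ ht₁ j, hj]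
              have hfst : (psi k r hr t₂ j).1 = i := by rw [← heq]; exact hj
              have e₂ : ((psi k r hr t₂ j).2 : ℕ) = t₂ i - 1 := by rw [hval t₂ ht₂ j, hfst]
              have e₃ : ((psi k r hr t₁ j).2 : ℕ) = ((psi k r hr t₂ j).2 : ℕ) := by rw [heq]
              have p1 := hpos₁ i; have p2 := hpos₂ i
              omega
            · by_cases h₂ : 2 ≤ t₂ i
              · obtain ⟨j, hj⟩ := hkey t₂ ht₂ i h₂
                have e₂ : ((psi k r hr t₂ j).2 : ℕ) = t₂ i - 1 := by rw [hval t₂ ht₂ j, hj]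
                have hfst : (psi k r hr t₁ j).1 = i := by rw [heq]; exact hj
                have e₁ : ((psi k r hr t₁ j).2 : ℕ) = t₁ i - 1 := by rw [hval t₁ ht₁ j, hfst]
                have e₃ : ((psi k r hr t₁ j).2 : ℕ) = ((psi k r hr t₂ j).2 : ℕ) := by rw [heq]
                have p1 := hpos₁ i; have p2 := hpos₂ i
                omega
              · have p1 := hpos₁ i; have p2 := hpos₂ i; omega
        _ = ((k + 1) * r) ^ (k - 1) := by
            rw [Finset.card_univ, Fintype.card_fun]
            simp [mul_comm]
        _ ≤ k * ((k + 1) * r) ^ (k - 1) := Nat.le_mul_of_pos_left _ (by omega)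
  constructor
  · calc r.choose k * (r + k)! = 2 ^ k * ∑ t ∈ M, Nat.multinomial Finset.univ t := hMsum.symm
      _ ≤ 2 ^ k * ∑ t ∈ F, Nat.multinomial Finset.univ t := by
          rw [hsplit]; exact Nat.mul_le_mul_left _ (Nat.le_add_right _ _)
  · calc 2 ^ k * ∑ t ∈ F, Nat.multinomial Finset.univ t
        = r.choose k * (r + k)! + 2 ^ k * ∑ t ∈ B, Nat.multinomial Finset.univ t := by
          rw [hsplit, Nat.mul_add, hMsum]
      _ ≤ r.choose k * (r + k)! + 2 ^ k * (k * ((k + 1) * r) ^ (k - 1) * (r + k)!) := by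
          apply Nat.add_le_add_left
          apply Nat.mul_le_mul_left
          calc ∑ t ∈ B, Nat.multinomial Finset.univ t ≤ B.card * (r + k)! := hBsum
            _ ≤ k * ((k + 1) * r) ^ (k - 1) * (r + k)! :=
                Nat.mul_le_mul_right _ hBcard
      _ = r.choose k * (r + k)! + 2 ^ k * (k * ((k + 1) * r) ^ (k - 1)) * (r + k)! := by ring

private lemma G_bounds (k r : ℕ) (hr : 0 < r) :
    r.choose k * (r + k)! ≤ 2 ^ k * G r (r + k) ∧
    2 ^ k * G r (r + k) ≤
      r.choose k * (r + k)! + 2 ^ k * (k * ((k + 1) * r) ^ (k - 1)) * (r + k)! := by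
  have h := core k r hr
    ((Finset.Nat.antidiagonalTuple r (r + k)).filter (fun t => ∀ i, 0 < t i))
    (fun t => by
      rw [Finset.mem_filter, Finset.Nat.mem_antidiagonalTuple])
  exact h

private lemma sub_ratio (c : ℕ) :
    Tendsto (fun n : ℕ => ((n - c : ℕ) : ℝ) / (n : ℝ)) atTop (nhds 1) := by
  have h : Tendsto (fun n : ℕ => 1 - (c : ℝ) / (n : ℝ)) atTop (nhds 1) := by
    have h2 : Tendsto (fun n : ℕ => (c : ℝ) / (n : ℝ)) atTop (nhds 0) :=
      Filter.Tendsto.div_atTop tendsto_const_nhds tendsto_natCast_atTop_atTop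
    simpa using tendsto_const_nhds.sub h2
  refine h.congr' ?_
  filter_upwards [eventually_ge_atTop c, eventually_gt_atTop 0] with n h1 h2
  have hc : ((n - c : ℕ) : ℝ) = (n : ℝ) - (c : ℝ) := by
    rw [Nat.cast_sub h1]
  have hn : (n : ℝ) ≠ 0 := by positivity
  rw [hc, sub_div, div_self hn]

private lemma descFactorial_ratio (j : ℕ) :
    Tendsto (fun n : ℕ => (n.descFactorial j : ℝ) / (n : ℝ) ^ j) atTop (nhds 1) := by
  induction j with
  | zero => simpa using tendsto_const_nhds
  | succ j ih =>
    have h := (sub_ratio j).mul ih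
    rw [one_mul] at h
    refine h.congr' ?_
    filter_upwards [eventually_gt_atTop 0] with n hn
    rw [Nat.descFactorial_succ, Nat.cast_mul, pow_succ]
    ring

private lemma L_tendsto (k : ℕ) :
    Tendsto (fun m : ℕ => ((m - k).descFactorial k : ℝ) / (m : ℝ) ^ k) atTop (nhds 1) := by
  have hcomp : Tendsto (fun m : ℕ => ((m - k).descFactorial k : ℝ) / ((m - k : ℕ) : ℝ) ^ k)
      atTop (nhds 1) := (descFactorial_ratio k).comp (tendsto_sub_atTop_nat k)
  have hq := (sub_ratio k).pow k
  rw [one_pow] at hq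
  have h := hcomp.mul hq
  rw [one_mul] at h
  refine h.congr' ?_
  filter_upwards [eventually_ge_atTop (k + 1)] with m hm
  have h1 : ((m - k : ℕ) : ℝ) ≠ 0 := Nat.cast_ne_zero.mpr (by omega)
  have h2 : (m : ℝ) ≠ 0 := Nat.cast_ne_zero.mpr (by omega)
  field_simp
  have h3 : (m : ℝ) ^ k ≠ 0 := pow_ne_zero k h2
  rw [div_pow]
  field_simp

private lemma E_tendsto (k : ℕ) :
    Tendsto (fun m : ℕ =>
        ((k * ((k + 1) * (m - k)) ^ (k - 1) : ℕ) : ℝ) * (2 ^ k * (k ! : ℝ)) / (m : ℝ) ^ k)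
      atTop (nhds 0) := by
  set A : ℝ := (k : ℝ) * ((k : ℝ) + 1) ^ (k - 1) * (2 ^ k * (k ! : ℝ)) with hA
  have hA0 : Tendsto (fun m : ℕ => A / (m : ℝ)) atTop (nhds 0) :=
    Filter.Tendsto.div_atTop tendsto_const_nhds tendsto_natCast_atTop_atTop
  apply tendsto_of_tendsto_of_tendsto_of_le_of_le' tendsto_const_nhds hA0
  · filter_upwards with m
    positivity
  · filter_upwards [eventually_ge_atTop (k + 1)] with m hm
    rcases Nat.eq_zero_or_pos k with hk | hk
    · subst hk
      simp [hA]
    · have hm0 : (0:ℝ) < (m : ℝ) := by exact_mod_cast (by omega : 0 < m)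
      have hcast : ((k * ((k + 1) * (m - k)) ^ (k - 1) : ℕ) : ℝ)
          = (k : ℝ) * (((k : ℝ) + 1) * ((m - k : ℕ) : ℝ)) ^ (k - 1) := by
        push_cast
        ring
      have hle : ((m - k : ℕ) : ℝ) ≤ (m : ℝ) := by exact_mod_cast Nat.sub_le m k
      have hpow : (m : ℝ) ^ k = (m : ℝ) ^ (k - 1) * (m : ℝ) := by
        conv_lhs => rw [show k = (k - 1) + 1 by omega]
        rw [pow_succ]
      rw [hcast, div_le_div_iff₀ (by positivity) hm0]
      calc (k : ℝ) * (((k : ℝ) + 1) * ((m - k : ℕ) : ℝ)) ^ (k - 1) * (2 ^ k * (k ! : ℝ)) * (m : ℝ)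
          ≤ (k : ℝ) * (((k : ℝ) + 1) * (m : ℝ)) ^ (k - 1) * (2 ^ k * (k ! : ℝ)) * (m : ℝ) := by
            gcongr
        _ = A * (m : ℝ) ^ k := by rw [hA, hpow, mul_pow]; ring

/-- For fixed `k ≥ 0`, `G(m−k, m) ∼ (m^k / (2^k k!)) · m!` as
`m → ∞`: the ratio of the two quantities tends to `1`. -/
theorem G_asymptotic (k : ℕ) :
    Filter.Tendsto
      (fun m : ℕ => (G (m - k) m : ℝ) /
        ((m : ℝ) ^ k * (Nat.factorial m : ℝ) / (2 ^ k * (Nat.factorial k : ℝ))))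
      Filter.atTop (nhds 1) := by
  have hL := L_tendsto k
  have hE := E_tendsto k
  have hU : Tendsto (fun m : ℕ => ((m - k).descFactorial k : ℝ) / (m : ℝ) ^ k +
      ((k * ((k + 1) * (m - k)) ^ (k - 1) : ℕ) : ℝ) * (2 ^ k * (k ! : ℝ)) / (m : ℝ) ^ k)
      atTop (nhds 1) := by
    simpa using hL.add hE
  apply tendsto_of_tendsto_of_tendsto_of_le_of_le' hL hU
  · filter_upwards [eventually_ge_atTop (2 * k + 1)] with m hm
    obtain ⟨r, rfl⟩ : ∃ r, m = r + k := ⟨m - k, by omega⟩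
    have hr : 0 < r := by omega
    obtain ⟨h1, -⟩ := G_bounds k r hr
    simp only [Nat.add_sub_cancel]
    have h1c : (r.choose k : ℝ) * ((r + k)! : ℝ) ≤ 2 ^ k * (G r (r + k) : ℝ) := by
      exact_mod_cast h1
    have hdf : (r.descFactorial k : ℝ) = (k ! : ℝ) * (r.choose k : ℝ) := by
      exact_mod_cast Nat.descFactorial_eq_factorial_mul_choose r k
    have hn : (0:ℝ) < ((r + k : ℕ) : ℝ) := by exact_mod_cast (by omega : 0 < r + k)
    have hfac : (0:ℝ) < ((r + k)! : ℝ) := by exact_mod_cast Nat.factorial_pos (r + k)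
    have hkfac : (0:ℝ) < (k ! : ℝ) := by exact_mod_cast Nat.factorial_pos k
    rw [div_div_eq_mul_div, div_le_div_iff₀ (by positivity) (by positivity)]
    calc (r.descFactorial k : ℝ) * (((r + k : ℕ) : ℝ) ^ k * ((r + k)! : ℝ))
        = ((r.choose k : ℝ) * ((r + k)! : ℝ)) * ((k ! : ℝ) * ((r + k : ℕ) : ℝ) ^ k) := by
          rw [hdf]; ring
      _ ≤ (2 ^ k * (G r (r + k) : ℝ)) * ((k ! : ℝ) * ((r + k : ℕ) : ℝ) ^ k) :=
          mul_le_mul_of_nonneg_right h1c (by positivity)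
      _ = (G r (r + k) : ℝ) * (2 ^ k * (k ! : ℝ)) * ((r + k : ℕ) : ℝ) ^ k := by ring
  · filter_upwards [eventually_ge_atTop (2 * k + 1)] with m hm
    obtain ⟨r, rfl⟩ : ∃ r, m = r + k := ⟨m - k, by omega⟩
    have hr : 0 < r := by omega
    obtain ⟨-, h2⟩ := G_bounds k r hr
    simp only [Nat.add_sub_cancel]
    have h2c : 2 ^ k * (G r (r + k) : ℝ) ≤ (r.choose k : ℝ) * ((r + k)! : ℝ)
        + 2 ^ k * ((k * ((k + 1) * r) ^ (k - 1) : ℕ) : ℝ) * ((r + k)! : ℝ) := by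
      exact_mod_cast h2
    have hdf : (r.descFactorial k : ℝ) = (k ! : ℝ) * (r.choose k : ℝ) := by
      exact_mod_cast Nat.descFactorial_eq_factorial_mul_choose r k
    have hn : (0:ℝ) < ((r + k : ℕ) : ℝ) := by exact_mod_cast (by omega : 0 < r + k)
    have hfac : (0:ℝ) < ((r + k)! : ℝ) := by exact_mod_cast Nat.factorial_pos (r + k)
    have hkfac : (0:ℝ) < (k ! : ℝ) := by exact_mod_cast Nat.factorial_pos k
    rw [div_div_eq_mul_div, ← add_div, div_le_div_iff₀ (by positivity) (by positivity)]
    calc (G r (r + k) : ℝ) * (2 ^ k * (k ! : ℝ)) * ((r + k : ℕ) : ℝ) ^ k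
        = (2 ^ k * (G r (r + k) : ℝ)) * ((k ! : ℝ) * ((r + k : ℕ) : ℝ) ^ k) := by ring
      _ ≤ ((r.choose k : ℝ) * ((r + k)! : ℝ)
            + 2 ^ k * ((k * ((k + 1) * r) ^ (k - 1) : ℕ) : ℝ) * ((r + k)! : ℝ))
            * ((k ! : ℝ) * ((r + k : ℕ) : ℝ) ^ k) :=
          mul_le_mul_of_nonneg_right h2c (by positivity)
      _ = ((r.descFactorial k : ℝ)
            + ((k * ((k + 1) * r) ^ (k - 1) : ℕ) : ℝ) * (2 ^ k * (k ! : ℝ)))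
            * (((r + k : ℕ) : ℝ) ^ k * ((r + k)! : ℝ)) := by
          rw [hdf]; ring
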